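/- Let 𝓑 be a directed family with U ∈ 𝓑 in which every constructible set has a unique swiss cheese decomposition. Then 𝓑 is unpackable. -/

import Mathlib

variable {U : Type*}

/-- A directed family: nonempty sets, any two nested or disjoint. -/
def DirFam (𝓑 : Set (Set U)) : Prop :=
  (∀ B ∈ 𝓑, B.Nonempty) ∧
    ∀ B₀ ∈ 𝓑, ∀ B₁ ∈ 𝓑, B₀ ⊆ B₁ ∨ B₁ ⊆ B₀ ∨ B₀ ∩ B₁ = ∅

/-- Constructible sets: finite boolean combinations of balls. -/
inductive Constr (𝓑 : Set (Set U)) : Set U → Prop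
  | ball {B : Set U} : B ∈ 𝓑 → Constr 𝓑 B
  | compl {X : Set U} : Constr 𝓑 X → Constr 𝓑 Xᶜ
  | union {X Y : Set U} : Constr 𝓑 X → Constr 𝓑 Y → Constr 𝓑 (X ∪ Y)

/-- A swiss cheese decomposition of X. -/
def IsSCD (𝓑 : Set (Set U)) (X : Set U) (n : ℕ) (A : Fin n → Set U)
    (H : Fin n → Set (Set U)) : Prop :=
  (∀ i, A i ∈ 𝓑) ∧ (∀ i, (H i).Finite) ∧ (∀ i, H i ⊆ 𝓑) ∧
  (∀ i, ∀ B ∈ H i, B ⊂ A i) ∧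
  (∀ i, ∀ B ∈ H i, ∀ C ∈ H i, B ≠ C → ¬B ⊆ C) ∧
  (∀ i j, i ≠ j → (A i \ ⋃₀ H i) ∩ (A j \ ⋃₀ H j) = ∅) ∧
  (∀ i j, A i ∉ H j) ∧
  (⋃ i, A i \ ⋃₀ H i) = X

/-- Unpackable: no ball is a finite union of proper sub-balls. -/
def Unpackable (𝓑 : Set (Set U)) : Prop :=
  ∀ A ∈ 𝓑, ∀ H : Set (Set U), H.Finite → H ⊆ 𝓑 → (∀ B ∈ H, B ⊂ A) → A ≠ ⋃₀ H

/-- If every constructible set has a unique swiss cheese decomposition, then the family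
is unpackable. -/
theorem stmt10 (𝓑 : Set (Set U)) (h : DirFam 𝓑) (hU : (Set.univ : Set U) ∈ 𝓑)
    (hex : ∀ X : Set U, Constr 𝓑 X →
      ∃ (n : ℕ) (A : Fin n → Set U) (H : Fin n → Set (Set U)), IsSCD 𝓑 X n A H)
    (huniq : ∀ (X : Set U) (n m : ℕ) (A : Fin n → Set U) (H : Fin n → Set (Set U))
      (A' : Fin m → Set U) (H' : Fin m → Set (Set U)),
      IsSCD 𝓑 X n A H → IsSCD 𝓑 X m A' H' →
      Set.range (fun i => A i \ ⋃₀ H i) = Set.range (fun j => A' j \ ⋃₀ H' j)) :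
    Unpackable 𝓑 := by
  rintro A hA H hHfin hH𝓑 hprop hAH
  classical
  -- maximal elements of H
  set M : Set (Set U) := {B | Maximal (· ∈ H) B} with hM
  have hMH : M ⊆ H := fun B hB => hB.1
  have hMfin : M.Finite := hHfin.subset hMH
  -- every element of H lies under some maximal element
  have hcover : ∀ B ∈ H, ∃ C ∈ M, B ⊆ C := by
    intro B hB
    obtain ⟨C, hBC, hC⟩ := hHfin.exists_le_maximal hB
    exact ⟨C, hC, hBC⟩
  have hsUnion : ⋃₀ M = A := by
    apply Set.Subset.antisymm
    · rw [hAH]; exact Set.sUnion_subset_sUnion hMH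
    · rw [hAH]
      intro x hx
      obtain ⟨B, hB, hxB⟩ := hx
      obtain ⟨C, hC, hBC⟩ := hcover B hB
      exact ⟨C, hC, hBC hxB⟩
  -- index M
  set s : Finset (Set U) := hMfin.toFinset with hs
  set m : ℕ := s.card with hm
  set e : { x // x ∈ s } ≃ Fin m := s.equivFin with he
  set A' : Fin m → Set U := fun j => (e.symm j : Set U) with hA'
  have hA'M : ∀ j, A' j ∈ M := fun j => hMfin.mem_toFinset.mp (e.symm j).2
  -- SCD 1 : single cheese A with no holes
  have scd1 : IsSCD 𝓑 A 1 (fun _ => A) (fun _ => (∅ : Set (Set U))) := by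
    refine ⟨fun _ => hA, fun _ => Set.finite_empty, fun _ => (Set.empty_subset _),
      fun _ B hB => absurd hB (Set.notMem_empty B),
      fun _ B hB => absurd hB (Set.notMem_empty B),
      fun i j hij => absurd (Subsingleton.elim i j) hij,
      fun _ _ => Set.notMem_empty _, ?_⟩
    simp [Set.iUnion_const]
  -- SCD 2 : the maximal balls, no holes
  have scd2 : IsSCD 𝓑 A m A' (fun _ => (∅ : Set (Set U))) := by
    refine ⟨fun j => hH𝓑 (hMH (hA'M j)), fun _ => Set.finite_empty,
      fun _ => (Set.empty_subset _),
      fun _ B hB => absurd hB (Set.notMem_empty B),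
      fun _ B hB => absurd hB (Set.notMem_empty B), ?_,
      fun _ _ => Set.notMem_empty _, ?_⟩
    · intro i j hij
      have hne : A' i ≠ A' j := by
        intro hEq
        apply hij
        have : e.symm i = e.symm j := Subtype.ext hEq
        simpa using congrArg e this
      have hi := hA'M i
      have hj := hA'M j
      have h1 : ¬ A' i ⊆ A' j := fun hsub =>
        hne (Set.Subset.antisymm hsub (hi.2 hj.1 hsub))
      have h2 : ¬ A' j ⊆ A' i := fun hsub =>
        hne (Set.Subset.antisymm (hj.2 hi.1 hsub) hsub)
      rcases h.2 _ (hH𝓑 (hMH hi)) _ (hH𝓑 (hMH hj)) with h3 | h3 | h3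
      · exact absurd h3 h1
      · exact absurd h3 h2
      · simpa using h3
    · have hrange : Set.range A' = M := by
        ext B
        constructor
        · rintro ⟨j, rfl⟩; exact hA'M j
        · intro hB
          have hBs : B ∈ s := hMfin.mem_toFinset.mpr hB
          refine ⟨e ⟨B, hBs⟩, ?_⟩
          simp [hA']
      calc (⋃ j, A' j \ ⋃₀ (∅ : Set (Set U))) = ⋃ j, A' j := by simp
        _ = ⋃₀ Set.range A' := (Set.sUnion_range A').symm
        _ = A := by rw [hrange, hsUnion]
  have := huniq A 1 m (fun _ => A) (fun _ => (∅ : Set (Set U))) A'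
    (fun _ => (∅ : Set (Set U))) scd1 scd2
  have hmem : A ∈ Set.range (fun j => A' j \ ⋃₀ (∅ : Set (Set U))) := by
    rw [← this]
    exact ⟨0, by simp⟩
  obtain ⟨j, hj⟩ := hmem
  have : A' j = A := by simpa using hj
  exact (hprop _ (hMH (hA'M j))).2 (this ▸ Set.Subset.refl A)
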